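/- Let H ⊆ GL₂(ℤ/9ℤ) be a subgroup whose image under the reduction map GL₂(ℤ/9ℤ) → GL₂(ℤ/3ℤ) is all of GL₂(ℤ/3ℤ), and suppose SL₂(ℤ/9ℤ) is not contained in H. Then 27 divides the index [GL₂(ℤ/9ℤ) : H]. -/

import Mathlib

set_option linter.unusedSectionVars false

open scoped MatrixGroups

/-- The map `GL₂(R) → GL₂(S)` induced by a ring homomorphism `R →+* S`. -/
abbrev glMap {R S : Type*} [CommRing R] [CommRing S] (f : R →+* S) :
    GL (Fin 2) R →* GL (Fin 2) S := Matrix.GeneralLinearGroup.map f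

/-- `SL₂(R)` viewed as a subgroup of `GL₂(R)`. -/
def SL2subgroup (R : Type*) [CommRing R] : Subgroup (GL (Fin 2) R) :=
  (Matrix.SpecialLinearGroup.toGL (n := Fin 2) (R := R)).range


open scoped MatrixGroups
open Matrix

namespace St19

abbrev f93 : ZMod 9 →+* ZMod 3 := ZMod.castHom (show 3 ∣ 9 by norm_num) (ZMod 3)

abbrev π9 : GL (Fin 2) (ZMod 9) →* GL (Fin 2) (ZMod 3) :=
  Matrix.GeneralLinearGroup.map f93

/-- entrywise lift -/
def L (A : Matrix (Fin 2) (Fin 2) (ZMod 3)) : Matrix (Fin 2) (Fin 2) (ZMod 9) :=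
  A.map (fun a => (a.val : ZMod 9))

lemma sq_zero (A : Matrix (Fin 2) (Fin 2) (ZMod 9)) :
    ((3 : ZMod 9) • A) * ((3 : ZMod 9) • A) = 0 := by
  rw [Matrix.smul_mul, Matrix.mul_smul, smul_smul,
    show (3 : ZMod 9) * 3 = 0 by decide, zero_smul]

/-- the basic kernel element -/
def φ (A : Matrix (Fin 2) (Fin 2) (ZMod 3)) : GL (Fin 2) (ZMod 9) :=
  ⟨1 + (3 : ZMod 9) • L A, 1 - (3 : ZMod 9) • L A,
   by rw [mul_sub, mul_one, add_mul, one_mul, sq_zero]; abel,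
   by rw [sub_mul, one_mul, mul_add, mul_one, sq_zero]; abel⟩

lemma φ_val (A : Matrix (Fin 2) (Fin 2) (ZMod 3)) :
    (φ A).val = 1 + (3 : ZMod 9) • L A := rfl

lemma red_L (A : Matrix (Fin 2) (Fin 2) (ZMod 3)) : (L A).map f93 = A := by
  ext i j
  simp only [L, Matrix.map_apply]
  generalize A i j = a; revert a; decide

lemma smul3_eq_of_red_eq {M N : Matrix (Fin 2) (Fin 2) (ZMod 9)}
    (h : M.map f93 = N.map f93) : (3 : ZMod 9) • M = (3 : ZMod 9) • N := by
  ext i j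
  have := congrFun (congrFun h i) j
  simp only [Matrix.map_apply, Matrix.smul_apply, smul_eq_mul] at this ⊢
  revert this
  generalize M i j = a; generalize N i j = b
  revert a b; decide


lemma map_smul3 (M : Matrix (Fin 2) (Fin 2) (ZMod 9)) :
    ((3 : ZMod 9) • M).map f93 = 0 := by
  ext i j
  simp only [Matrix.map_apply, Matrix.smul_apply, smul_eq_mul, Matrix.zero_apply]
  generalize M i j = a; revert a; decide

lemma val_map_one_add (M : Matrix (Fin 2) (Fin 2) (ZMod 9)) :
    ((1 : Matrix (Fin 2) (Fin 2) (ZMod 9)) + M).map f93 = 1 + M.map f93 := by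
  ext i j
  fin_cases i <;> fin_cases j <;>
    simp [Matrix.map_apply, Matrix.add_apply, Matrix.one_apply, map_add] <;> decide

lemma π9_val (u : GL (Fin 2) (ZMod 9)) : (π9 u).val = u.val.map f93 := rfl

lemma φ_ker (A : Matrix (Fin 2) (Fin 2) (ZMod 3)) : π9 (φ A) = 1 := by
  apply Units.ext
  rw [π9_val, Units.val_one, φ_val, val_map_one_add, map_smul3, add_zero]

lemma φ_mul (A B : Matrix (Fin 2) (Fin 2) (ZMod 3)) : φ A * φ B = φ (A + B) := by
  apply Units.ext
  rw [Units.val_mul, φ_val, φ_val, φ_val]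
  have h9 : ((3 : ZMod 9) • L A) * ((3 : ZMod 9) • L B) = 0 := by
    rw [Matrix.smul_mul, Matrix.mul_smul, smul_smul,
      show (3 : ZMod 9) * 3 = 0 by decide, zero_smul]
  have hL : (3 : ZMod 9) • L (A + B) = (3 : ZMod 9) • L A + (3 : ZMod 9) • L B := by
    rw [← smul_add]
    apply smul3_eq_of_red_eq
    rw [Matrix.map_add _ (fun a b => map_add f93 a b), red_L, red_L, red_L]
  rw [add_mul, one_mul, mul_add, mul_one, h9, hL]
  abel

lemma φ_zero : φ 0 = 1 := by
  apply Units.ext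
  rw [φ_val, Units.val_one]
  have : (3 : ZMod 9) • L 0 = (3 : ZMod 9) • (0 : Matrix (Fin 2) (Fin 2) (ZMod 9)) := by
    apply smul3_eq_of_red_eq
    rw [red_L]; ext i j; simp
  rw [this, smul_zero, add_zero]

lemma φ_inv (A : Matrix (Fin 2) (Fin 2) (ZMod 3)) : (φ A)⁻¹ = φ (-A) := by
  rw [inv_eq_iff_mul_eq_one, φ_mul, add_neg_cancel, φ_zero]

lemma φ_conj (u : GL (Fin 2) (ZMod 9)) (g : GL (Fin 2) (ZMod 3))
    (hu : π9 u = g) (A : Matrix (Fin 2) (Fin 2) (ZMod 3)) :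
    u * φ A * u⁻¹ = φ (g.val * A * (g⁻¹).val) := by
  apply Units.ext
  rw [Units.val_mul, Units.val_mul, φ_val, φ_val]
  have key : (3 : ZMod 9) • (u.val * L A * (u⁻¹).val)
      = (3 : ZMod 9) • L (g.val * A * (g⁻¹).val) := by
    apply smul3_eq_of_red_eq
    rw [red_L, Matrix.map_mul, Matrix.map_mul, red_L]
    have h1 : u.val.map f93 = g.val := by rw [← π9_val, hu]
    have h2 : (u⁻¹).val.map f93 = (g⁻¹).val := by
      rw [← π9_val, map_inv, hu]
    rw [h1, h2]
  calc u.val * (1 + (3 : ZMod 9) • L A) * (u⁻¹).val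
      = u.val * (u⁻¹).val + (3 : ZMod 9) • (u.val * L A * (u⁻¹).val) := by
        rw [mul_add, add_mul, mul_one, Matrix.mul_smul, Matrix.smul_mul]
    _ = 1 + (3 : ZMod 9) • L (g.val * A * (g⁻¹).val) := by
        rw [key, ← Units.val_mul, mul_inv_cancel, Units.val_one]

lemma φ_inj {A B : Matrix (Fin 2) (Fin 2) (ZMod 3)} (h : φ A = φ B) : A = B := by
  have hv := congrArg Units.val h
  rw [φ_val, φ_val, add_right_inj] at hv
  ext i j
  have := congrFun (congrFun hv i) j
  simp only [L, Matrix.smul_apply, Matrix.map_apply, smul_eq_mul] at this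
  revert this
  generalize A i j = a; generalize B i j = b
  revert a b; decide

/-- decode a kernel entry -/
def dec (c : ZMod 9) : ZMod 3 := (c.val / 3 : ℕ)

lemma φ_surj {u : GL (Fin 2) (ZMod 9)} (hu : π9 u = 1) :
    ∃ A, u = φ A := by
  refine ⟨Matrix.of (fun i j => dec (u.val i j - (1 : Matrix (Fin 2) (Fin 2) (ZMod 9)) i j)), ?_⟩
  have hred : u.val.map f93 = 1 := by rw [← π9_val, hu, Units.val_one]
  apply Units.ext
  rw [φ_val]
  ext i j
  have hij : f93 (u.val i j) = (1 : Matrix (Fin 2) (Fin 2) (ZMod 3)) i j := by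
    rw [← hred]; simp [Matrix.map_apply]
  simp only [Matrix.add_apply, Matrix.smul_apply, L, Matrix.map_apply, Matrix.of_apply,
    smul_eq_mul]
  by_cases hd : i = j
  · subst hd
    simp only [Matrix.one_apply_eq] at hij ⊢
    revert hij
    generalize u.val i i = e
    revert e; decide
  · simp only [Matrix.one_apply_ne hd] at hij ⊢
    revert hij
    generalize u.val i j = e
    revert e; decide


abbrev K9 : Subgroup (GL (Fin 2) (ZMod 9)) := π9.ker

lemma mem_K9 {u : GL (Fin 2) (ZMod 9)} : u ∈ K9 ↔ π9 u = 1 := MonoidHom.mem_ker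

noncomputable def kerEquiv : Matrix (Fin 2) (Fin 2) (ZMod 3) ≃ K9 := by
  apply Equiv.ofBijective (fun A => ⟨φ A, mem_K9.2 (φ_ker A)⟩)
  constructor
  · intro A B h
    exact φ_inj (congrArg Subtype.val h)
  · rintro ⟨u, hu⟩
    obtain ⟨A, rfl⟩ := φ_surj (mem_K9.1 hu)
    exact ⟨A, rfl⟩

lemma card_K9 : Nat.card K9 = 81 := by
  rw [← Nat.card_congr kerEquiv, Nat.card_eq_fintype_card]
  rfl

/-- scalar 4·I -/
def zsc : GL (Fin 2) (ZMod 9) := φ 1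

lemma zsc_order : orderOf zsc = 3 := by
  apply orderOf_eq_prime
  · show zsc ^ 3 = 1
    rw [pow_succ, pow_succ, pow_one, zsc, φ_mul, φ_mul]
    rw [show (1 + 1 + 1 : Matrix (Fin 2) (Fin 2) (ZMod 3)) = 0 by decide, φ_zero]
  · intro h
    have := congrArg Units.val h
    rw [zsc, φ_val, Units.val_one] at this
    have := congrFun (congrFun this 0) 0
    revert this
    decide

def Zsc : Subgroup (GL (Fin 2) (ZMod 9)) := Subgroup.zpowers zsc

lemma card_Zsc : Nat.card Zsc = 3 := by
  rw [Zsc, Nat.card_zpowers, zsc_order]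

lemma mem_Zsc_of_scalar (a : ZMod 3) : φ (a • 1) ∈ Zsc := by
  obtain h|h|h : a = 0 ∨ a = 1 ∨ a = 2 := by revert a; decide
  all_goals subst h
  · rw [show ((0 : ZMod 3) • (1 : Matrix (Fin 2) (Fin 2) (ZMod 3))) = 0 by decide, φ_zero]
    exact one_mem _
  · rw [show ((1 : ZMod 3) • (1 : Matrix (Fin 2) (Fin 2) (ZMod 3))) = 1 by decide]
    exact Subgroup.mem_zpowers _
  · have : φ ((2 : ZMod 3) • 1) = zsc * zsc := by
      rw [zsc, φ_mul]; congr 1; decide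
    rw [this]
    exact mul_mem (Subgroup.mem_zpowers _) (Subgroup.mem_zpowers _)


def mk3 (M N : Matrix (Fin 2) (Fin 2) (ZMod 3)) (h1 : M * N = 1) (h2 : N * M = 1) :
    GL (Fin 2) (ZMod 3) := ⟨M, N, h1, h2⟩

def g1 : GL (Fin 2) (ZMod 3) := mk3 !![1,0;0,2] !![1,0;0,2] (by decide) (by decide)
def g2 : GL (Fin 2) (ZMod 3) := mk3 !![1,1;0,1] !![1,2;0,1] (by decide) (by decide)
def g3 : GL (Fin 2) (ZMod 3) := mk3 !![1,0;1,1] !![1,0;2,1] (by decide) (by decide)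
def wsw : GL (Fin 2) (ZMod 3) := mk3 !![0,1;1,0] !![0,1;1,0] (by decide) (by decide)

section key3

variable (S : Set (Matrix (Fin 2) (Fin 2) (ZMod 3)))
variable (hconj : ∀ B ∈ S, ∀ g : GL (Fin 2) (ZMod 3), g.val * B * (g⁻¹).val ∈ S)
variable (hadd : ∀ B ∈ S, ∀ C ∈ S, B + C ∈ S)
variable (hneg : ∀ B ∈ S, -B ∈ S)

include hconj hadd hneg

lemma hzero {A} (hA : A ∈ S) : (0 : Matrix (Fin 2) (Fin 2) (ZMod 3)) ∈ S := by
  have := hadd A hA (-A) (hneg A hA)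
  rwa [add_neg_cancel] at this

lemma hsm {B} (hB : B ∈ S) (k : ZMod 3) : k • B ∈ S := by
  obtain h|h|h : k = 0 ∨ k = 1 ∨ k = 2 := by revert k; decide
  · rw [h, zero_smul]; exact hzero S hconj hadd hneg hB
  · rwa [h, one_smul]
  · rw [h, show (2 : ZMod 3) • B = B + B by rw [two_smul]]
    exact hadd B hB B hB

lemma from_v (hv : !![1,2;0,2] ∈ S) : !![0,1;0,0] ∈ S := by
  have h1 := hconj _ hv g1
  have h2 := hadd _ hv _ (hneg _ h1)
  rw [show g1.val * !![1,2;0,2] * (g1⁻¹).val = !![1,1;0,2] by decide] at h2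
  rwa [show !![1,2;0,2] + -(!![1,1;0,2]) = (!![0,1;0,0] : Matrix (Fin 2) (Fin 2) (ZMod 3))
    by decide] at h2

lemma from_m2 (hm : !![0,1;1,0] ∈ S) : !![0,1;0,0] ∈ S := by
  have h1 := hconj _ hm g2
  have h2 := hadd _ h1 _ (hneg _ hm)
  rw [show g2.val * !![0,1;1,0] * (g2⁻¹).val = !![1,0;1,2] by decide] at h2
  rw [show !![1,0;1,2] + -(!![0,1;1,0]) = (!![1,2;0,2] : Matrix (Fin 2) (Fin 2) (ZMod 3))
    by decide] at h2
  exact from_v S hconj hadd hneg h2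

lemma from_m3 (hm : !![0,1;2,0] ∈ S) : !![0,1;0,0] ∈ S := by
  have h1 := hconj _ hm g2
  have h2 := hadd _ h1 _ (hneg _ hm)
  rw [show g2.val * !![0,1;2,0] * (g2⁻¹).val = !![2,2;2,1] by decide] at h2
  rw [show !![2,2;2,1] + -(!![0,1;2,0]) = (!![2,1;0,1] : Matrix (Fin 2) (Fin 2) (ZMod 3))
    by decide] at h2
  have h3 := hsm S hconj hadd hneg h2 2
  rw [show (2 : ZMod 3) • !![2,1;0,1] = (!![1,2;0,2] : Matrix (Fin 2) (Fin 2) (ZMod 3))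
    by decide] at h3
  exact from_v S hconj hadd hneg h3

lemma from_m1 (hm : !![0,0;1,0] ∈ S) : !![0,1;0,0] ∈ S := by
  have h1 := hconj _ hm wsw
  rwa [show wsw.val * !![0,0;1,0] * (wsw⁻¹).val = !![0,1;0,0] by decide] at h1

lemma hanti (β γ : ZMod 3) (hne : ¬(β = 0 ∧ γ = 0)) (hx : !![0,β;γ,0] ∈ S) :
    !![0,1;0,0] ∈ S := by
  have h9 : ∀ x : ZMod 3, x = 0 ∨ x = 1 ∨ x = 2 := by decide
  have hsc := hsm S hconj hadd hneg hx 2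
  rcases h9 β with hb|hb|hb <;> rcases h9 γ with hc|hc|hc <;> subst hb <;> subst hc
  · exact absurd ⟨rfl, rfl⟩ hne
  · exact from_m1 S hconj hadd hneg hx
  · rw [show (2:ZMod 3) • !![0,(0:ZMod 3);2,0] = !![0,0;1,0] by decide] at hsc
    exact from_m1 S hconj hadd hneg hsc
  · exact hx
  · exact from_m2 S hconj hadd hneg hx
  · exact from_m3 S hconj hadd hneg hx
  · rw [show (2:ZMod 3) • !![0,(2:ZMod 3);0,0] = !![0,1;0,0] by decide] at hsc
    exact hsc
  · rw [show (2:ZMod 3) • !![0,(2:ZMod 3);1,0] = !![0,1;2,0] by decide] at hsc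
    exact from_m3 S hconj hadd hneg hsc
  · rw [show (2:ZMod 3) • !![0,(2:ZMod 3);2,0] = !![0,1;1,0] by decide] at hsc
    exact from_m2 S hconj hadd hneg hsc

lemma key3 {A : Matrix (Fin 2) (Fin 2) (ZMod 3)} (hA : A ∈ S)
    (hns : ∀ k : ZMod 3, A ≠ k • 1) :
    ∀ B : Matrix (Fin 2) (Fin 2) (ZMod 3), Matrix.trace B = 0 → B ∈ S := by
  -- first produce E12
  have hE12 : !![0,1;0,0] ∈ S := by
    by_cases hbc : A 0 1 = 0 ∧ A 1 0 = 0
    · -- A is diagonal, a ≠ d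
      have had : A 0 0 ≠ A 1 1 := by
        intro h
        apply hns (A 0 0)
        rw [Matrix.eta_fin_two A, hbc.1, hbc.2, ← h]
        ext i j
        fin_cases i <;> fin_cases j <;> simp [Matrix.one_apply]
      have hA' : !![A 0 0, 0; 0, A 1 1] ∈ S := by
        have h := hA
        rw [Matrix.eta_fin_two A, hbc.1, hbc.2] at h
        exact h
      have h1 := hconj _ hA' g2
      have h2 := hadd _ h1 _ (hneg _ hA')
      rw [show ∀ a d : ZMod 3, g2.val * !![a,0;0,d] * (g2⁻¹).val + -(!![a,0;0,d])
          = !![0, 2*a+d; 0, 0] from by decide] at h2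
      refine hanti S hconj hadd hneg (2 * A 0 0 + A 1 1) 0 ?_ h2
      rintro ⟨h, -⟩
      apply had
      revert h
      generalize A 0 0 = a; generalize A 1 1 = d
      revert a d; decide
    · -- b ≠ 0 or c ≠ 0
      have h1 := hconj _ hA g1
      have h2 := hadd _ hA _ (hneg _ h1)
      rw [Matrix.eta_fin_two A] at h2
      rw [show ∀ a b c d : ZMod 3, !![a,b;c,d] + -(g1.val * !![a,b;c,d] * (g1⁻¹).val)
          = !![0, 2*b; 2*c, 0] from by decide] at h2
      refine hanti S hconj hadd hneg (2 * A 0 1) (2 * A 1 0) ?_ h2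
      rintro ⟨h1', h2'⟩
      apply hbc
      constructor
      · revert h1'; generalize A 0 1 = b; revert b; decide
      · revert h2'; generalize A 1 0 = c; revert c; decide
  have hE21 : !![0,0;1,0] ∈ S := by
    have h1 := hconj _ hE12 wsw
    rwa [show wsw.val * !![0,1;0,0] * (wsw⁻¹).val = !![0,0;1,0] by decide] at h1
  have hW : !![1,0;0,2] ∈ S := by
    have h1 := hconj _ hE12 g3
    rw [show g3.val * !![0,1;0,0] * (g3⁻¹).val = !![2,1;2,1] by decide] at h1
    have h2 := hadd _ h1 _ (hsm S hconj hadd hneg hE12 2)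
    have h3 := hadd _ h2 _ hE21
    rw [show !![2,1;2,1] + (2:ZMod 3) • !![0,1;0,0] + !![0,0;1,0]
        = (!![2,0;0,1] : Matrix (Fin 2) (Fin 2) (ZMod 3)) by decide] at h3
    have h4 := hsm S hconj hadd hneg h3 2
    rwa [show (2:ZMod 3) • !![2,0;0,1] = (!![1,0;0,2] : Matrix (Fin 2) (Fin 2) (ZMod 3))
      by decide] at h4
  intro B hB
  rw [Matrix.trace_fin_two] at hB
  have hrep : B = B 0 0 • !![1,0;0,2] + (B 0 1 • !![0,1;0,0] + B 1 0 • !![0,0;1,0]) := by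
    rw [Matrix.eta_fin_two B]
    have : B 1 1 = 2 * B 0 0 := by
      revert hB; generalize B 0 0 = p; generalize B 1 1 = s; revert p s; decide
    rw [this]
    generalize B 0 0 = p; generalize B 0 1 = q; generalize B 1 0 = r
    revert p q r; decide
  rw [hrep]
  exact hadd _ (hsm S hconj hadd hneg hW _) _
    (hadd _ (hsm S hconj hadd hneg hE12 _) _ (hsm S hconj hadd hneg hE21 _))

end key3


def e3 : GL (Fin 2) (ZMod 3) := g2
def f3 : GL (Fin 2) (ZMod 3) := g3

lemma epow : ∀ x : ZMod 3, (!![1,1;0,1] : Matrix (Fin 2) (Fin 2) (ZMod 3)) ^ x.val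
    = !![1,x;0,1] := by decide

lemma fpow : ∀ x : ZMod 3, (!![1,0;1,1] : Matrix (Fin 2) (Fin 2) (ZMod 3)) ^ x.val
    = !![1,0;x,1] := by decide

lemma sl2_fact : ∀ a b c d : ZMod 3, a * d - b * c = 1 →
    ∃ x z y w : ZMod 3, !![a,b;c,d] = !![1,x;0,1] * !![1,0;z,1] * !![1,y;0,1] * !![1,0;w,1] := by
  decide

lemma gen_sl23 (T : Subgroup (GL (Fin 2) (ZMod 3))) (he : e3 ∈ T) (hf : f3 ∈ T)
    (g : GL (Fin 2) (ZMod 3)) (hdet : g.val.det = 1) : g ∈ T := by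
  rw [Matrix.det_fin_two] at hdet
  obtain ⟨x, z, y, w, hfact⟩ := sl2_fact _ _ _ _ hdet
  have hg : g = e3 ^ x.val * f3 ^ z.val * e3 ^ y.val * f3 ^ w.val := by
    apply Units.ext
    rw [Units.val_mul, Units.val_mul, Units.val_mul, Units.val_pow_eq_pow_val,
      Units.val_pow_eq_pow_val, Units.val_pow_eq_pow_val, Units.val_pow_eq_pow_val]
    show g.val = (!![1,1;0,1]) ^ x.val * (!![1,0;1,1]) ^ z.val * (!![1,1;0,1]) ^ y.val
      * (!![1,0;1,1]) ^ w.val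
    rw [epow, fpow, epow, fpow, ← hfact, ← Matrix.eta_fin_two]
  rw [hg]
  exact mul_mem (mul_mem (mul_mem (pow_mem he _) (pow_mem hf _)) (pow_mem he _)) (pow_mem hf _)


def dd2 : GL (Fin 2) (ZMod 3) := mk3 !![2,0;0,1] !![2,0;0,1] (by decide) (by decide)

lemma tr_of_det {B : Matrix (Fin 2) (Fin 2) (ZMod 3)} (h : ((φ B).val).det = 1) :
    Matrix.trace B = 0 := by
  rw [φ_val, Matrix.det_fin_two] at h
  rw [Matrix.trace_fin_two]
  simp only [Matrix.add_apply, Matrix.smul_apply, Matrix.one_apply, L, Matrix.map_apply,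
    smul_eq_mul] at h
  norm_num at h
  revert h
  generalize B 0 0 = p; generalize B 0 1 = q; generalize B 1 0 = r; generalize B 1 1 = t
  revert p q r t; decide

lemma comm_aux (a b : (ZMod 9)ˣ) : a * b * a⁻¹ * b⁻¹ = 1 := by
  rw [mul_comm a b, mul_assoc b a a⁻¹, mul_inv_cancel, mul_one, mul_inv_cancel]

end St19

open St19 in
theorem statement19aux (H : Subgroup (GL (Fin 2) (ZMod 9)))
    (hsurj : Subgroup.map π9 H = ⊤)
    (hSL : ¬ (Matrix.SpecialLinearGroup.toGL (n := Fin 2) (R := ZMod 9)).range ≤ H) :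
    27 ∣ H.index := by
  classical
  have hlift : ∀ g : GL (Fin 2) (ZMod 3), ∃ h, h ∈ H ∧ π9 h = g := by
    intro g
    have hg : g ∈ Subgroup.map π9 H := by rw [hsurj]; trivial
    obtain ⟨h, hh, rfl⟩ := hg
    exact ⟨h, hh, rfl⟩
  have hmain : H ⊓ K9 ≤ Zsc := by
    intro x hx
    obtain ⟨A, rfl⟩ := φ_surj (mem_K9.1 hx.2)
    by_cases hsc : ∃ k : ZMod 3, A = k • 1
    · obtain ⟨k, rfl⟩ := hsc; exact mem_Zsc_of_scalar k
    · exfalso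
      apply hSL
      push_neg at hsc
      set S : Set (Matrix (Fin 2) (Fin 2) (ZMod 3)) := {B | φ B ∈ H} with hS
      have hconj : ∀ B ∈ S, ∀ g : GL (Fin 2) (ZMod 3), g.val * B * (g⁻¹).val ∈ S := by
        intro B hB g
        obtain ⟨h, hh, hπ⟩ := hlift g
        show φ _ ∈ H
        rw [← φ_conj h g hπ B]
        exact mul_mem (mul_mem hh hB) (inv_mem hh)
      have hadd : ∀ B ∈ S, ∀ C ∈ S, B + C ∈ S := by
        intro B hB C hC
        show φ _ ∈ H
        rw [← φ_mul]
        exact mul_mem hB hC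
      have hneg : ∀ B ∈ S, -B ∈ S := by
        intro B hB
        show φ _ ∈ H
        rw [← φ_inv]
        exact inv_mem hB
      have htr := key3 S hconj hadd hneg (show A ∈ S from hx.1) hsc
      set R : Subgroup (GL (Fin 2) (ZMod 3)) :=
        Subgroup.map π9 (H ⊓ (Matrix.GeneralLinearGroup.det).ker) with hR
      have hcomm : ∀ g₁ g₂ : GL (Fin 2) (ZMod 3), g₁ * g₂ * g₁⁻¹ * g₂⁻¹ ∈ R := by
        intro g₁ g₂
        obtain ⟨h₁, hh₁, hπ₁⟩ := hlift g₁
        obtain ⟨h₂, hh₂, hπ₂⟩ := hlift g₂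
        refine Subgroup.mem_map.mpr ⟨h₁ * h₂ * h₁⁻¹ * h₂⁻¹, Subgroup.mem_inf.mpr ⟨?_, ?_⟩, ?_⟩
        · exact mul_mem (mul_mem (mul_mem hh₁ hh₂) (inv_mem hh₁)) (inv_mem hh₂)
        · show Matrix.GeneralLinearGroup.det (h₁ * h₂ * h₁⁻¹ * h₂⁻¹) = 1
          rw [_root_.map_mul, _root_.map_mul, _root_.map_mul, map_inv, map_inv]
          exact comm_aux _ _
        · rw [_root_.map_mul, _root_.map_mul, _root_.map_mul, map_inv, map_inv, hπ₁, hπ₂]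
      have heR : e3 ∈ R := by
        have h := hcomm dd2 e3
        rwa [show dd2 * e3 * dd2⁻¹ * e3⁻¹ = e3 from Units.ext (by decide)] at h
      have hfR : f3 ∈ R := by
        have h := hcomm g1 f3
        rwa [show g1 * f3 * g1⁻¹ * f3⁻¹ = f3 from Units.ext (by decide)] at h
      intro u hu
      obtain ⟨s, rfl⟩ := hu
      have hdet3 : (π9 (Matrix.SpecialLinearGroup.toGL s)).val.det = 1 := by
        rw [π9_val]
        show (f93.mapMatrix (Matrix.SpecialLinearGroup.toGL s).val).det = 1
        calc (f93.mapMatrix (Matrix.SpecialLinearGroup.toGL s).val).det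
            = f93 ((Matrix.SpecialLinearGroup.toGL s).val.det) := (RingHom.map_det _ _).symm
          _ = f93 1 := by rw [show ((Matrix.SpecialLinearGroup.toGL s).val).det = 1 from s.prop]
          _ = 1 := map_one _
      obtain ⟨h, hh, hπh⟩ := gen_sl23 R heR hfR _ hdet3
      have hyk : π9 (Matrix.SpecialLinearGroup.toGL s * h⁻¹) = 1 := by
        rw [_root_.map_mul, map_inv, hπh, mul_inv_cancel]
      obtain ⟨B, hB⟩ := φ_surj hyk
      have hdet9 : ((Matrix.SpecialLinearGroup.toGL s * h⁻¹).val).det = 1 := by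
        rw [Units.val_mul, Matrix.det_mul]
        have h1 : (Matrix.SpecialLinearGroup.toGL s).val.det = 1 := s.prop
        have h2 : ((h⁻¹).val).det = 1 := by
          have hk : Matrix.GeneralLinearGroup.det h⁻¹ = 1 := by
            rw [map_inv, show Matrix.GeneralLinearGroup.det h = 1 from hh.2, inv_one]
          have hkv := congrArg Units.val hk
          rwa [Matrix.GeneralLinearGroup.val_det_apply, Units.val_one] at hkv
        rw [h1, h2, one_mul]
      rw [hB] at hdet9
      have hBH : φ B ∈ H := htr B (tr_of_det hdet9)
      have hrw : Matrix.SpecialLinearGroup.toGL s = φ B * h := by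
        rw [← hB, inv_mul_cancel_right]
      rw [hrw]
      exact mul_mem hBH hh.1
  -- arithmetic
  set n := Nat.card (GL (Fin 2) (ZMod 3)) with hn
  have hnpos : 0 < n := Nat.card_pos
  have h1 : K9.index = n := by
    rw [← Subgroup.relIndex_top_right, Subgroup.relIndex_ker]
    have htop : Subgroup.map π9 (⊤ : Subgroup (GL (Fin 2) (ZMod 9))) = ⊤ := by
      rw [eq_top_iff, ← hsurj]
      exact Subgroup.map_mono le_top
    rw [htop, Subgroup.card_top]
  have h2 : K9.relIndex H = n := by rw [Subgroup.relIndex_ker, hsurj, Subgroup.card_top]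
  have h3 : K9.relIndex H * Nat.card ↥(K9 ⊓ H) = Nat.card H := by
    have he : Nat.card ↥(K9.subgroupOf H) = Nat.card ↥(K9 ⊓ H) := by
      rw [← Subgroup.inf_subgroupOf_right]
      exact Nat.card_congr (Subgroup.subgroupOfEquivOfLe inf_le_right).toEquiv
    rw [Subgroup.relIndex, ← he]
    exact Subgroup.index_mul_card _
  have hc : Nat.card ↥(K9 ⊓ H) ∣ 3 := by
    rw [← card_Zsc]
    exact Subgroup.card_dvd_of_le (fun x hx => hmain ⟨hx.2, hx.1⟩)
  have h5 := Subgroup.index_mul_card K9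
  rw [card_K9, h1] at h5
  have h6 := Subgroup.index_mul_card H
  rw [← h3, h2] at h6
  have key : H.index * Nat.card ↥(K9 ⊓ H) = 81 := by
    apply Nat.eq_of_mul_eq_mul_left hnpos
    calc n * (H.index * Nat.card ↥(K9 ⊓ H))
        = H.index * (n * Nat.card ↥(K9 ⊓ H)) := by ring
      _ = Nat.card (GL (Fin 2) (ZMod 9)) := h6
      _ = n * 81 := h5.symm
  rcases (Nat.Prime.eq_one_or_self_of_dvd Nat.prime_three _ hc) with h|h <;> rw [h] at key <;>
    omega


/-- Let `H ⊆ GL₂(ℤ/9ℤ)` be a subgroup surjecting onto `GL₂(ℤ/3ℤ)` and with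
`SL₂(ℤ/9ℤ) ⊄ H`.  Then `27` divides `[GL₂(ℤ/9ℤ) : H]`. -/
theorem statement19 (H : Subgroup (GL (Fin 2) (ZMod 9)))
    (hsurj : Subgroup.map (glMap (ZMod.castHom (show 3 ∣ 9 by norm_num) (ZMod 3))) H = ⊤)
    (hSL : ¬ SL2subgroup (ZMod 9) ≤ H) :
    27 ∣ H.index := by
  exact statement19aux H hsurj hSL
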